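/- Let ι be a finite set of agents and τ a finite set of tasks, with each agent's action being either a task in τ or the null assignment nul. Suppose each task utility u j : (Π i, A i) → ℝ is fully local in the sense that u j (Function.update a i b) = u j a whenever a i ≠ j and b ≠ j. Then for every profile a, every agent i with a i = c, and every alternative action b ≠ c, the team utility difference for the unilateral deviation decomposes over the two affected tasks: Σ_{k ∈ τ} u k (Function.update a i b) − Σ_{k ∈ τ} u k a = (u c (Function.update a i b) − u c a) + (u b (Function.update a i b) − u b a) when both b and c are tasks (with the corresponding term omitted when b or c equals nul). -/

import Mathlib

/-- If each task utility is fully local (`u j` depends only on the actions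
of agents assigned to task `j`), then the team-utility difference for a unilateral
deviation of agent `i` from action `c = a i` to a different action `b` decomposes over
the two affected tasks; the term corresponding to `b` (resp. `c`) is omitted (i.e., `0`)
when the action is the null assignment `none`. -/
theorem team_utility_difference_decomposes_over_affected_tasks
    {ι : Type*} [Fintype ι] [DecidableEq ι] {τ : Type*} [Fintype τ]
    (A : ι → Set (Option τ))
    (u : τ → (∀ i, A i) → ℝ)
    (hlocal : ∀ (j : τ) (a : ∀ i, A i) (i : ι) (b : A i),
      (a i : Option τ) ≠ some j → (b : Option τ) ≠ some j →
      u j (Function.update a i b) = u j a)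
    (a : ∀ i, A i) (i : ι) (b : A i)
    (hbc : (b : Option τ) ≠ (a i : Option τ)) :
    (∑ k : τ, u k (Function.update a i b)) - (∑ k : τ, u k a)
      = Option.elim (a i : Option τ) 0
          (fun c => u c (Function.update a i b) - u c a)
        + Option.elim (b : Option τ) 0
          (fun c => u c (Function.update a i b) - u c a) := by
  classical
  rw [← Finset.sum_sub_distrib]
  have hz : ∀ k : τ, (a i : Option τ) ≠ some k → (b : Option τ) ≠ some k →
      u k (Function.update a i b) - u k a = 0 := by
    intro k h1 h2
    rw [hlocal k a i b h1 h2, sub_self]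
  rcases ha : (a i : Option τ) with _ | c <;> rcases hb : (b : Option τ) with _ | d
  · exact absurd (hb.trans ha.symm) hbc
  · simp only [Option.elim_none, Option.elim_some, zero_add]
    exact Finset.sum_eq_single d
      (fun k _ hk => hz k (by simp [ha]) (by simp [hb]; exact fun h => hk h.symm))
      (fun h => absurd (Finset.mem_univ d) h)
  · simp only [Option.elim_none, Option.elim_some, add_zero]
    exact Finset.sum_eq_single c
      (fun k _ hk => hz k (by simp [ha]; exact fun h => hk h.symm) (by simp [hb]))
      (fun h => absurd (Finset.mem_univ c) h)
  · simp only [Option.elim_some]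
    have hcd : c ≠ d := fun h => hbc (by rw [ha, hb, h])
    have hp := Finset.sum_pair (f := fun k => u k (Function.update a i b) - u k a) hcd
    rw [← hp]
    refine (Finset.sum_subset (Finset.subset_univ _) ?_).symm
    intro k _ hk
    simp only [Finset.mem_insert, Finset.mem_singleton, not_or] at hk
    exact hz k (by simp [ha]; exact fun h => hk.1 h.symm) (by simp [hb]; exact fun h => hk.2 h.symm)
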